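/- Sets where the pairwise energy is convex (Proposition 5.2): let W : 𝕋^d → ℝ be continuous and let W(x) = W⁺(x) + K(x) + 2c be an admissible dual decomposition. Let S ⊆ 𝕋^d be a closed set such that W⁺(x − y) = 0 for all x, y ∈ S. Then for all probability measures ρ₁, ρ₂ on 𝕋^d supported in S and all λ ∈ [0,1], E(λρ₁ + (1−λ)ρ₂) ≤ λ E(ρ₁) + (1−λ) E(ρ₂); that is, the pairwise energy E is convex when restricted to probability measures supported in S. -/

import Mathlib

open MeasureTheory Real
open scoped ENNReal

theorem cos2pi_periodic : Function.Periodic (fun t : ℝ => Real.cos (2 * Real.pi * t)) 1 := by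
  intro x; simp [mul_add, Real.cos_add_two_pi]

theorem sin2pi_periodic : Function.Periodic (fun t : ℝ => Real.sin (2 * Real.pi * t)) 1 := by
  intro x; simp [mul_add, Real.sin_add_two_pi]

/-- The function `x ↦ cos (2π x)` on the circle `ℝ/ℤ`. -/
noncomputable def cosA : AddCircle (1 : ℝ) → ℝ := cos2pi_periodic.lift

/-- The function `x ↦ sin (2π x)` on the circle `ℝ/ℤ`. -/
noncomputable def sinA : AddCircle (1 : ℝ) → ℝ := sin2pi_periodic.lift

/-- The `d`-dimensional torus `𝕋^d = ℝ^d/ℤ^d`, with its Haar probability measure `volume`. -/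
abbrev Torus (d : ℕ) := Fin d → AddCircle (1 : ℝ)

/-- `cos (2π k·x)` for `k ∈ ℤ^d` and `x ∈ 𝕋^d`. -/
noncomputable def tcos {d : ℕ} (k : Fin d → ℤ) (x : Torus d) : ℝ := cosA (∑ i, k i • x i)

/-- `sin (2π k·x)` for `k ∈ ℤ^d` and `x ∈ 𝕋^d`. -/
noncomputable def tsin {d : ℕ} (k : Fin d → ℤ) (x : Torus d) : ℝ := sinA (∑ i, k i • x i)

/-- The pairwise interaction energy `E(ρ) = (1/2) ∫∫ W(x - y) dρ(x) dρ(y)`. -/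
noncomputable def energy {d : ℕ} (W : Torus d → ℝ) (ρ : Measure (Torus d)) : ℝ :=
  (1/2) * ∫ x, ∫ y, W (x - y) ∂ρ ∂ρ

open scoped NNReal

lemma cosA_continuous : Continuous cosA :=
  Continuous.quotient_liftOn' (by continuity) _

lemma sinA_continuous : Continuous sinA :=
  Continuous.quotient_liftOn' (by continuity) _

lemma cosA_sub (x y : AddCircle (1 : ℝ)) :
    cosA (x - y) = cosA x * cosA y + sinA x * sinA y := by
  induction x using QuotientAddGroup.induction_on with
  | H t =>
  induction y using QuotientAddGroup.induction_on with
  | H s =>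
  rw [← QuotientAddGroup.mk_sub]
  show Real.cos (2 * Real.pi * (t - s)) = _
  rw [mul_sub, Real.cos_sub]
  rfl

lemma abs_cosA_le (x : AddCircle (1 : ℝ)) : |cosA x| ≤ 1 := by
  induction x using QuotientAddGroup.induction_on with
  | H t => exact Real.abs_cos_le_one _

lemma abs_sinA_le (x : AddCircle (1 : ℝ)) : |sinA x| ≤ 1 := by
  induction x using QuotientAddGroup.induction_on with
  | H t => exact Real.abs_sin_le_one _

lemma tcos_continuous {d : ℕ} (k : Fin d → ℤ) : Continuous (tcos k) :=
  cosA_continuous.comp (continuous_finset_sum _ fun i _ =>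
    (continuous_zsmul (k i)).comp (continuous_apply i))

lemma tsin_continuous {d : ℕ} (k : Fin d → ℤ) : Continuous (tsin k) :=
  sinA_continuous.comp (continuous_finset_sum _ fun i _ =>
    (continuous_zsmul (k i)).comp (continuous_apply i))

lemma abs_tcos_le {d : ℕ} (k : Fin d → ℤ) (x : Torus d) : |tcos k x| ≤ 1 := abs_cosA_le _
lemma abs_tsin_le {d : ℕ} (k : Fin d → ℤ) (x : Torus d) : |tsin k x| ≤ 1 := abs_sinA_le _

lemma tcos_sub {d : ℕ} (k : Fin d → ℤ) (x y : Torus d) :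
    tcos k (x - y) = tcos k x * tcos k y + tsin k x * tsin k y := by
  unfold tcos tsin
  rw [show (∑ i, k i • (x - y) i) = (∑ i, k i • x i) - ∑ i, k i • y i by
    simp [smul_sub, Finset.sum_sub_distrib]]
  exact cosA_sub _ _

lemma cont_integrable {d : ℕ} {f : Torus d → ℝ} (hf : Continuous f)
    (μ : Measure (Torus d)) [IsFiniteMeasure μ] : Integrable f μ :=
  integrableOn_univ.mp (hf.continuousOn.integrableOn_compact isCompact_univ)

lemma summable_nnnorm {ι : Type*} {a : ι → ℝ} (ha : Summable a) :
    Summable fun k => ‖a k‖₊ :=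
  NNReal.summable_coe.mp (by simpa [Real.norm_eq_abs] using ha.abs)

lemma nnlint_le {d : ℕ} (μ : Measure (Torus d)) [IsProbabilityMeasure μ]
    {f : Torus d → ℝ} {C : ℝ≥0} (hf : ∀ x, ‖f x‖₊ ≤ C) :
    ∫⁻ x, ‖f x‖₊ ∂μ ≤ (C : ℝ≥0∞) := by
  calc ∫⁻ x, (‖f x‖₊ : ℝ≥0∞) ∂μ ≤ ∫⁻ _, (C : ℝ≥0∞) ∂μ :=
        lintegral_mono fun x => ENNReal.coe_le_coe.mpr (hf x)
    _ = C := by simp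

lemma nnnorm_tcos_le {d : ℕ} (k : Fin d → ℤ) (x : Torus d) : ‖tcos k x‖₊ ≤ 1 := by
  rw [← NNReal.coe_le_coe]; simpa [Real.norm_eq_abs] using abs_tcos_le k x

lemma nnnorm_tsin_le {d : ℕ} (k : Fin d → ℤ) (x : Torus d) : ‖tsin k x‖₊ ≤ 1 := by
  rw [← NNReal.coe_le_coe]; simpa [Real.norm_eq_abs] using abs_tsin_le k x

lemma abs_intC_le {d : ℕ} (μ : Measure (Torus d)) [IsProbabilityMeasure μ]
    {f : Torus d → ℝ} (hf : ∀ x, |f x| ≤ 1) : |∫ x, f x ∂μ| ≤ 1 := by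
  have := norm_integral_le_of_norm_le_const (μ := μ) (f := f) (C := 1)
    (Filter.Eventually.of_forall fun x => by simpa [Real.norm_eq_abs] using hf x)
  simpa [Real.norm_eq_abs] using this


lemma two_prod_abs_le {x y u v : ℝ} (hx : |x| ≤ 1) (hy : |y| ≤ 1) (hu : |u| ≤ 1)
    (hv : |v| ≤ 1) : |x * y + u * v| ≤ 2 := by
  have h1 : |x * y| ≤ 1 := by rw [abs_mul]; nlinarith [abs_nonneg x, abs_nonneg y]
  have h2 : |u * v| ≤ 1 := by rw [abs_mul]; nlinarith [abs_nonneg u, abs_nonneg v]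
  calc |x * y + u * v| ≤ |x * y| + |u * v| := abs_add_le _ _
    _ ≤ 2 := by linarith

lemma abs_mul_two_prod_le {a x y u v : ℝ} (hx : |x| ≤ 1) (hy : |y| ≤ 1) (hu : |u| ≤ 1)
    (hv : |v| ≤ 1) : ‖a * (x * y + u * v)‖ ≤ 2 * |a| := by
  rw [Real.norm_eq_abs, abs_mul, mul_comm (2:ℝ)]
  exact mul_le_mul_of_nonneg_left (two_prod_abs_le hx hy hu hv) (abs_nonneg _)

/-- The key identity for the double integral of `W(x-y)` against measures on `S`. -/
lemma pair_integral {d : ℕ} (W Wp : Torus d → ℝ) (a : (Fin d → ℤ) → ℝ) (c : ℝ)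
    (hWc : Continuous W) (ha_sum : Summable a)
    (hdecomp : ∀ x, W x = Wp x + (∑' k : Fin d → ℤ, a k * tcos k x) + 2 * c)
    (S : Set (Torus d)) (hWpS : ∀ x ∈ S, ∀ y ∈ S, Wp (x - y) = 0)
    (μ ν : Measure (Torus d)) [IsProbabilityMeasure μ] [IsProbabilityMeasure ν]
    (hμ : μ Sᶜ = 0) (hν : ν Sᶜ = 0) :
    ∫ x, ∫ y, W (x - y) ∂ν ∂μ
      = (∑' k : Fin d → ℤ, a k * ((∫ x, tcos k x ∂μ) * (∫ y, tcos k y ∂ν)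
          + (∫ x, tsin k x ∂μ) * (∫ y, tsin k y ∂ν))) + 2 * c := by
  have haeμ : ∀ᵐ x ∂μ, x ∈ S := by rw [ae_iff]; simpa [Set.compl_def] using hμ
  have haeν : ∀ᵐ y ∂ν, y ∈ S := by rw [ae_iff]; simpa [Set.compl_def] using hν
  have habs : Summable fun k => |a k| := ha_sum.abs
  set Cν : (Fin d → ℤ) → ℝ := fun k => ∫ y, tcos k y ∂ν with hCν
  set Sν : (Fin d → ℤ) → ℝ := fun k => ∫ y, tsin k y ∂ν with hSν
  have hCν1 : ∀ k, |Cν k| ≤ 1 := fun k => abs_intC_le ν (abs_tcos_le k)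
  have hSν1 : ∀ k, |Sν k| ≤ 1 := fun k => abs_intC_le ν (abs_tsin_le k)
  -- inner integral identity, for x ∈ S
  have hinner : ∀ x ∈ S, ∫ y, W (x - y) ∂ν
      = (∑' k, a k * (tcos k x * Cν k + tsin k x * Sν k)) + 2 * c := by
    intro x hx
    have h1 : ∫ y, W (x - y) ∂ν
        = ∫ y, ((∑' k, a k * tcos k (x - y)) + 2 * c) ∂ν := by
      refine integral_congr_ae ?_
      filter_upwards [haeν] with y hy
      rw [hdecomp (x - y), hWpS x hx y hy, zero_add]
    rw [h1]
    have hmeas : ∀ k : Fin d → ℤ,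
        AEStronglyMeasurable (fun y : Torus d => a k * tcos k (x - y)) ν :=
      fun k => (Continuous.aestronglyMeasurable (by
        exact continuous_const.mul ((tcos_continuous k).comp
          (continuous_const.sub continuous_id)))) 
    have hlint : (∑' k : Fin d → ℤ, ∫⁻ y, ‖a k * tcos k (x - y)‖₊ ∂ν) ≠ ∞ := by
      refine ne_top_of_le_ne_top
        (ENNReal.tsum_coe_ne_top_iff_summable.mpr (summable_nnnorm ha_sum))
        (ENNReal.tsum_le_tsum fun k => nnlint_le ν fun y => ?_)
      calc ‖a k * tcos k (x - y)‖₊ = ‖a k‖₊ * ‖tcos k (x - y)‖₊ := nnnorm_mul _ _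
        _ ≤ ‖a k‖₊ * 1 := mul_le_mul_right (nnnorm_tcos_le _ _) _
        _ = ‖a k‖₊ := mul_one _
    have hint_tsum : Integrable (fun y : Torus d => ∑' k, a k * tcos k (x - y)) ν := by
      refine cont_integrable ?_ ν
      refine continuous_tsum (u := fun k => |a k|) (fun k => ?_) habs (fun k y => ?_)
      · exact continuous_const.mul ((tcos_continuous k).comp
          (continuous_const.sub continuous_id))
      · rw [Real.norm_eq_abs, abs_mul]
        exact mul_le_of_le_one_right (abs_nonneg _) (abs_tcos_le _ _)
    rw [integral_add hint_tsum (integrable_const _), integral_const,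
        probReal_univ, one_smul,
        integral_tsum hmeas hlint]
    congr 1
    refine tsum_congr fun k => ?_
    rw [integral_const_mul]
    congr 1
    have : ∀ y : Torus d, tcos k (x - y) = tcos k x * tcos k y + tsin k x * tsin k y :=
      fun y => tcos_sub k x y
    simp_rw [this]
    rw [integral_add ((cont_integrable (tcos_continuous k) ν).const_mul _)
        ((cont_integrable (tsin_continuous k) ν).const_mul _),
      integral_const_mul, integral_const_mul]
  -- outer integral
  have h2 : ∫ x, ∫ y, W (x - y) ∂ν ∂μ
      = ∫ x, ((∑' k, a k * (tcos k x * Cν k + tsin k x * Sν k)) + 2 * c) ∂μ := by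
    refine integral_congr_ae ?_
    filter_upwards [haeμ] with x hx
    exact hinner x hx
  rw [h2]
  have hcont2 : ∀ k : Fin d → ℤ,
      Continuous (fun x : Torus d => a k * (tcos k x * Cν k + tsin k x * Sν k)) := by
    intro k
    exact continuous_const.mul (((tcos_continuous k).mul continuous_const).add
      ((tsin_continuous k).mul continuous_const))
  have hbd2 : ∀ (k : Fin d → ℤ) (x : Torus d),
      ‖a k * (tcos k x * Cν k + tsin k x * Sν k)‖ ≤ 2 * |a k| := by
    intro k x
    exact abs_mul_two_prod_le (abs_tcos_le _ _) (hCν1 _) (abs_tsin_le _ _) (hSν1 _)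
  have hint2 : Integrable (fun x : Torus d =>
      ∑' k, a k * (tcos k x * Cν k + tsin k x * Sν k)) μ :=
    cont_integrable (continuous_tsum (u := fun k => 2 * |a k|) hcont2
      (habs.mul_left 2) hbd2) μ
  rw [integral_add hint2 (integrable_const _), integral_const,
      probReal_univ, one_smul]
  congr 1
  have hmeas2 : ∀ k : Fin d → ℤ,
      AEStronglyMeasurable (fun x : Torus d => a k * (tcos k x * Cν k + tsin k x * Sν k)) μ :=
    fun k => (hcont2 k).aestronglyMeasurable
  have hlint2 : (∑' k : Fin d → ℤ,
      ∫⁻ x, ‖a k * (tcos k x * Cν k + tsin k x * Sν k)‖₊ ∂μ) ≠ ∞ := by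
    refine ne_top_of_le_ne_top
      (ENNReal.tsum_coe_ne_top_iff_summable.mpr (summable_nnnorm (habs.mul_left 2)))
      (ENNReal.tsum_le_tsum fun k => nnlint_le μ fun x => ?_)
    rw [← NNReal.coe_le_coe]
    simpa [Real.norm_eq_abs, abs_mul, abs_of_nonneg (abs_nonneg (a k))] using hbd2 k x
  rw [integral_tsum hmeas2 hlint2]
  refine tsum_congr fun k => ?_
  rw [integral_const_mul]
  congr 1
  rw [integral_add ((cont_integrable (tcos_continuous k) μ).mul_const _)
      ((cont_integrable (tsin_continuous k) μ).mul_const _),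
    integral_mul_const, integral_mul_const]

/-- Proposition 5.2: if `W = W⁺ + K + 2c` is an admissible dual decomposition and `S` is a
closed set with `W⁺(x - y) = 0` for all `x, y ∈ S`, then the pairwise energy `E` is convex
on probability measures supported in `S`. -/
theorem stmt11 {d : ℕ} (W Wp : Torus d → ℝ) (a : (Fin d → ℤ) → ℝ) (c : ℝ)
    (hWc : Continuous W) (hWpc : Continuous Wp) (hWp : ∀ x, 0 ≤ Wp x)
    (ha_symm : ∀ k, a (-k) = a k) (ha_nonneg : ∀ k, k ≠ 0 → 0 ≤ a k) (ha0 : a 0 = 0)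
    (ha_sum : Summable a)
    (hdecomp : ∀ x, W x = Wp x + (∑' k : Fin d → ℤ, a k * tcos k x) + 2 * c)
    (S : Set (Torus d)) (hS : IsClosed S) (hWpS : ∀ x ∈ S, ∀ y ∈ S, Wp (x - y) = 0)
    (ρ₁ ρ₂ : Measure (Torus d)) [IsProbabilityMeasure ρ₁] [IsProbabilityMeasure ρ₂]
    (hρ₁ : ρ₁ Sᶜ = 0) (hρ₂ : ρ₂ Sᶜ = 0) (l : ℝ) (hl0 : 0 ≤ l) (hl1 : l ≤ 1) :
    energy W (ENNReal.ofReal l • ρ₁ + ENNReal.ofReal (1 - l) • ρ₂)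
      ≤ l * energy W ρ₁ + (1 - l) * energy W ρ₂ := by
  have hl1' : (0:ℝ) ≤ 1 - l := by linarith
  -- bound on W
  obtain ⟨x₀, -, hx₀⟩ := isCompact_univ.exists_isMaxOn (Set.univ_nonempty)
    hWc.norm.continuousOn
  set M : ℝ := ‖W x₀‖ with hM
  have hWbd : ∀ z, ‖W z‖ ≤ M := fun z => hx₀ (Set.mem_univ z)
  -- integrability of inner functions
  have hWxint : ∀ (x : Torus d) (ρ : Measure (Torus d)) [IsFiniteMeasure ρ],
      Integrable (fun y => W (x - y)) ρ := fun x ρ _ =>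
    cont_integrable (hWc.comp (continuous_const.sub continuous_id)) ρ
  set g₁ : Torus d → ℝ := fun x => ∫ y, W (x - y) ∂ρ₁ with hg₁def
  set g₂ : Torus d → ℝ := fun x => ∫ y, W (x - y) ∂ρ₂ with hg₂def
  have hgmeas : ∀ (ρ : Measure (Torus d)) [SFinite ρ],
      StronglyMeasurable (fun x : Torus d => ∫ y, W (x - y) ∂ρ) := by
    intro ρ _
    have : StronglyMeasurable (fun p : Torus d × Torus d => W (p.1 - p.2)) :=
      (hWc.comp (continuous_fst.sub continuous_snd)).stronglyMeasurable
    exact this.integral_prod_right'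
  have hgbd : ∀ (ρ : Measure (Torus d)) [IsProbabilityMeasure ρ] (x : Torus d),
      ‖∫ y, W (x - y) ∂ρ‖ ≤ M := by
    intro ρ _ x
    have := norm_integral_le_of_norm_le_const (μ := ρ) (f := fun y => W (x - y)) (C := M)
      (Filter.Eventually.of_forall fun y => hWbd _)
    simpa using this
  have hgint : ∀ (ρ ρ' : Measure (Torus d)) [IsProbabilityMeasure ρ] [IsProbabilityMeasure ρ'],
      Integrable (fun x : Torus d => ∫ y, W (x - y) ∂ρ) ρ' := by
    intro ρ ρ' _ _
    exact ⟨(hgmeas ρ).aestronglyMeasurable,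
      HasFiniteIntegral.of_bounded (Filter.Eventually.of_forall (hgbd ρ))⟩
  set ρm : Measure (Torus d) := ENNReal.ofReal l • ρ₁ + ENNReal.ofReal (1 - l) • ρ₂ with hρm
  -- expansion of integrals against ρm
  have hsplit : ∀ (f : Torus d → ℝ), Integrable f ρ₁ → Integrable f ρ₂ →
      ∫ x, f x ∂ρm = l * ∫ x, f x ∂ρ₁ + (1 - l) * ∫ x, f x ∂ρ₂ := by
    intro f h1 h2
    rw [hρm, integral_add_measure (h1.smul_measure ENNReal.ofReal_ne_top)
        (h2.smul_measure ENNReal.ofReal_ne_top),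
      integral_smul_measure, integral_smul_measure,
      ENNReal.toReal_ofReal hl0, ENNReal.toReal_ofReal hl1', smul_eq_mul, smul_eq_mul]
  -- inner integral wrt ρm
  have hinner : ∀ x : Torus d, ∫ y, W (x - y) ∂ρm = l * g₁ x + (1 - l) * g₂ x :=
    fun x => hsplit _ (hWxint x ρ₁) (hWxint x ρ₂)
  set I : Measure (Torus d) → Measure (Torus d) → ℝ :=
    fun μ ν => ∫ x, ∫ y, W (x - y) ∂ν ∂μ with hI
  -- energy of mixture
  have hE : ∫ x, ∫ y, W (x - y) ∂ρm ∂ρm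
      = l * (l * I ρ₁ ρ₁ + (1 - l) * I ρ₁ ρ₂) + (1 - l) * (l * I ρ₂ ρ₁ + (1 - l) * I ρ₂ ρ₂) := by
    have e1 : ∫ x, ∫ y, W (x - y) ∂ρm ∂ρm = ∫ x, (l * g₁ x + (1 - l) * g₂ x) ∂ρm :=
      integral_congr_ae (Filter.Eventually.of_forall hinner)
    rw [e1, hsplit (fun x => l * g₁ x + (1 - l) * g₂ x)
        (by exact ((hgint ρ₁ ρ₁).const_mul l).add ((hgint ρ₂ ρ₁).const_mul (1 - l)))
        (by exact ((hgint ρ₁ ρ₂).const_mul l).add ((hgint ρ₂ ρ₂).const_mul (1 - l)))]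
    rw [integral_add ((hgint ρ₁ ρ₁).const_mul l) ((hgint ρ₂ ρ₁).const_mul (1 - l)),
        integral_add ((hgint ρ₁ ρ₂).const_mul l) ((hgint ρ₂ ρ₂).const_mul (1 - l)),
        integral_const_mul, integral_const_mul, integral_const_mul, integral_const_mul]
  -- key inequality via pair_integral
  set C : Measure (Torus d) → (Fin d → ℤ) → ℝ := fun ρ k => ∫ x, tcos k x ∂ρ with hC
  set Sf : Measure (Torus d) → (Fin d → ℤ) → ℝ := fun ρ k => ∫ x, tsin k x ∂ρ with hSf
  have hpair : ∀ (μ ν : Measure (Torus d)) [IsProbabilityMeasure μ] [IsProbabilityMeasure ν],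
      μ Sᶜ = 0 → ν Sᶜ = 0 →
      I μ ν = (∑' k : Fin d → ℤ, a k * (C μ k * C ν k + Sf μ k * Sf ν k)) + 2 * c := by
    intro μ ν _ _ hμ hν
    exact pair_integral W Wp a c hWc ha_sum hdecomp S hWpS μ ν hμ hν
  have hCbd : ∀ (ρ : Measure (Torus d)) [IsProbabilityMeasure ρ] (k), |C ρ k| ≤ 1 :=
    fun ρ _ k => abs_intC_le ρ (abs_tcos_le k)
  have hSbd : ∀ (ρ : Measure (Torus d)) [IsProbabilityMeasure ρ] (k), |Sf ρ k| ≤ 1 :=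
    fun ρ _ k => abs_intC_le ρ (abs_tsin_le k)
  have hsummable : ∀ (μ ν : Measure (Torus d)) [IsProbabilityMeasure μ] [IsProbabilityMeasure ν],
      Summable (fun k => a k * (C μ k * C ν k + Sf μ k * Sf ν k)) := by
    intro μ ν _ _
    refine Summable.of_norm_bounded (g := fun k => 2 * |a k|) (ha_sum.abs.mul_left 2) fun k => ?_
    exact abs_mul_two_prod_le (hCbd μ k) (hCbd ν k) (hSbd μ k) (hSbd ν k)
  have hkey : I ρ₁ ρ₂ + I ρ₂ ρ₁ ≤ I ρ₁ ρ₁ + I ρ₂ ρ₂ := by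
    rw [hpair ρ₁ ρ₂ hρ₁ hρ₂, hpair ρ₂ ρ₁ hρ₂ hρ₁, hpair ρ₁ ρ₁ hρ₁ hρ₁, hpair ρ₂ ρ₂ hρ₂ hρ₂]
    have hdiff : (∑' k, a k * (C ρ₁ k * C ρ₁ k + Sf ρ₁ k * Sf ρ₁ k))
        + (∑' k, a k * (C ρ₂ k * C ρ₂ k + Sf ρ₂ k * Sf ρ₂ k))
        - ((∑' k, a k * (C ρ₁ k * C ρ₂ k + Sf ρ₁ k * Sf ρ₂ k))
          + (∑' k, a k * (C ρ₂ k * C ρ₁ k + Sf ρ₂ k * Sf ρ₁ k)))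
        = ∑' k, a k * ((C ρ₁ k - C ρ₂ k)^2 + (Sf ρ₁ k - Sf ρ₂ k)^2) := by
      rw [← Summable.tsum_add (hsummable ρ₁ ρ₁) (hsummable ρ₂ ρ₂),
        ← Summable.tsum_add (hsummable ρ₁ ρ₂) (hsummable ρ₂ ρ₁),
        ← Summable.tsum_sub ((hsummable ρ₁ ρ₁).add (hsummable ρ₂ ρ₂))
          ((hsummable ρ₁ ρ₂).add (hsummable ρ₂ ρ₁))]
      exact tsum_congr fun k => by ring
    have hpos : 0 ≤ ∑' k, a k * ((C ρ₁ k - C ρ₂ k)^2 + (Sf ρ₁ k - Sf ρ₂ k)^2) := by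
      refine tsum_nonneg fun k => ?_
      by_cases hk : k = 0
      · simp [hk, ha0]
      · exact mul_nonneg (ha_nonneg k hk) (by positivity)
    linarith [hdiff ▸ hpos]
  -- conclude
  show (1/2 : ℝ) * ∫ x, ∫ y, W (x - y) ∂ρm ∂ρm
      ≤ l * ((1/2) * I ρ₁ ρ₁) + (1 - l) * ((1/2) * I ρ₂ ρ₂)
  rw [hE]
  nlinarith [mul_nonneg (mul_nonneg hl0 hl1') (sub_nonneg.mpr hkey)]
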